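/- Let (M, 𝒜, μ) be a finite measure space, X = L²(μ) the real Hilbert space with inner product ⟪f,g⟫ = ∫ f·g dμ, and J : X → ℝ absolutely one-homogeneous. Suppose C ⊆ M is measurable and C is an eigenset of J with eigenvalue λ and ratio β > 0. Then for every measurable set D with C ⊆ D ⊆ M, one has λ·(μ(C) − β·(μ(D) − μ(C))) ≤ J(χ_D). (Intermediate inequality from the proof of the paper's main Theorem: testing the eigenset subgradient against the indicator of any superset.) -/

import Mathlib

open MeasureTheory RealInnerProductSpace

/-- `p` is a subgradient of `J` at `u`. -/
def IsSubgradientAt {X : Type*} [NormedAddCommGroup X] [InnerProductSpace ℝ X]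
    (J : X → ℝ) (p u : X) : Prop :=
  ∀ v : X, J v ≥ J u + ⟪p, v - u⟫

/-- The indicator function of a measurable set as an element of `L²(μ)`. -/
noncomputable def chi {M : Type*} [MeasurableSpace M] (μ : Measure M) [IsFiniteMeasure μ]
    {C : Set M} (hC : MeasurableSet C) : Lp ℝ 2 μ :=
  indicatorConstLp 2 hC (measure_ne_top μ C) (1 : ℝ)

/-- `C` is an eigenset of `J` with eigenvalue `lam` and ratio `β > 0`:
`ψ := χ_C − β • χ_{M \ C}` satisfies that `lam • ψ` is a subgradient of `J` at `ψ`. -/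
def IsEigenset {M : Type*} [MeasurableSpace M] (μ : Measure M) [IsFiniteMeasure μ]
    (J : Lp ℝ 2 μ → ℝ) {C : Set M} (hC : MeasurableSet C) (lam β : ℝ) : Prop :=
  0 < β ∧ IsSubgradientAt J
    (lam • (chi μ hC - β • chi μ hC.compl)) (chi μ hC - β • chi μ hC.compl)

lemma inner_chi_chi {M : Type*} [MeasurableSpace M] (μ : Measure M) [IsFiniteMeasure μ]
    {S T : Set M} (hS : MeasurableSet S) (hT : MeasurableSet T) :
    ⟪chi μ hS, chi μ hT⟫ = (μ (T ∩ S)).toReal := by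
  rw [chi, chi, L2.inner_indicatorConstLp_one,
    setIntegral_indicatorConstLp hS hT (measure_ne_top μ T) (1 : ℝ), smul_eq_mul, mul_one,
    measureReal_def]

/-- Intermediate inequality: testing the eigenset subgradient against the indicator of
any measurable superset `D ⊇ C` gives
`λ·(μ(C) − β·(μ(D) − μ(C))) ≤ J(χ_D)`. -/
theorem eigenset_superset_inequality
    {M : Type*} [MeasurableSpace M] (μ : Measure M) [IsFiniteMeasure μ]
    (J : Lp ℝ 2 μ → ℝ)
    (hhom : ∀ (α : ℝ) (u : Lp ℝ 2 μ), J (α • u) = |α| * J u)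
    {C : Set M} (hC : MeasurableSet C)
    (lam β : ℝ)
    (heig : IsEigenset μ J hC lam β) :
    ∀ (D : Set M) (hD : MeasurableSet D), C ⊆ D →
      lam * ((μ C).toReal - β * ((μ D).toReal - (μ C).toReal)) ≤ J (chi μ hD) := by
  intro D hD hCD
  obtain ⟨hβ, hsub⟩ := heig
  set ψ : Lp ℝ 2 μ := chi μ hC - β • chi μ hC.compl with hψ
  -- J ψ ≥ ⟪lam • ψ, ψ⟫
  have h2 : J ((2:ℝ) • ψ) = 2 * J ψ := by
    have := hhom 2 ψ
    simpa using this
  have hJψ : J ψ ≥ ⟪lam • ψ, ψ⟫ := by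
    have := hsub ((2:ℝ) • ψ)
    rw [h2] at this
    have h22 : (2 : ℝ) • ψ - ψ = ψ := by
      rw [two_smul]; abel
    rw [h22] at this
    linarith
  -- subgradient inequality at χ_D
  have key := hsub (chi μ hD)
  rw [inner_sub_right] at key
  have hlow : ⟪lam • ψ, chi μ hD⟫ ≤ J (chi μ hD) := by linarith
  -- compute the inner product
  have hinner : ⟪lam • ψ, chi μ hD⟫
      = lam * ((μ (D ∩ C)).toReal - β * (μ (D ∩ Cᶜ)).toReal) := by
    rw [real_inner_smul_left, hψ, inner_sub_left, real_inner_smul_left,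
      inner_chi_chi, inner_chi_chi]
  have hDC : D ∩ C = C := Set.inter_eq_right.mpr hCD
  have hDCc : (μ (D ∩ Cᶜ)).toReal = (μ D).toReal - (μ C).toReal := by
    have : D ∩ Cᶜ = D \ C := rfl
    rw [this, measure_diff hCD hC.nullMeasurableSet (measure_ne_top μ C),
      ENNReal.toReal_sub_of_le (measure_mono hCD) (measure_ne_top μ D)]
  rw [hinner, hDC, hDCc] at hlow
  exact hlow
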